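/- arXiv:2203.11886 — 2 statements merged into one kernel-verified Lean document; each statement's English description precedes it below -/
import Mathlib

section
/- (Richmond–Shallit recursion) For d ≥ 2 and n ≥ 0, f_d(n) = Σ_{k=0}^{n} C(n,k)^2 · f_{d-1}(k), where f_d(n) = Σ_{m_1+⋯+m_d=n} (n!/(m_1!⋯m_d!))^2. -/
/-- `f d n = Σ_{m₁+⋯+m_d = n} (n! / (m₁! ⋯ m_d!))²`, the number of abelian squares of
length `n + n` over a `d`-letter alphabet. -/
def f (d n : ℕ) : ℕ :=
  ∑ m ∈ Finset.Nat.antidiagonalTuple d n, (Nat.multinomial Finset.univ m) ^ 2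

lemma multinomial_univ_cons (k a : ℕ) (x : Fin k → ℕ) :
    Nat.multinomial Finset.univ (Fin.cons a x : Fin (k + 1) → ℕ) =
      (a + ∑ i, x i).choose a * Nat.multinomial Finset.univ x := by
  rw [Fin.univ_succ, Nat.multinomial_cons]
  simp only [Fin.cons_zero, Finset.sum_map, Function.Embedding.coeFn_mk, Fin.cons_succ]
  congr 1
  unfold Nat.multinomial
  simp [Finset.sum_map, Finset.prod_map]

lemma sum_antidiagonalTuple_succ {M : Type*} [AddCommMonoid M] (k n : ℕ)
    (g : (Fin (k + 1) → ℕ) → M) :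
    ∑ m ∈ Finset.Nat.antidiagonalTuple (k + 1) n, g m =
      ∑ p ∈ Finset.HasAntidiagonal.antidiagonal n,
        ∑ x ∈ Finset.Nat.antidiagonalTuple k p.2, g (Fin.cons p.1 x) := by
  rw [← Finset.sum_sigma (Finset.HasAntidiagonal.antidiagonal n) (fun p => Finset.Nat.antidiagonalTuple k p.2)
    (fun q => g (Fin.cons q.1.1 q.2))]
  refine Finset.sum_nbij' (fun m => ⟨(m 0, ∑ i, Fin.tail m i), Fin.tail m⟩)
    (fun q => Fin.cons q.1.1 q.2) ?_ ?_ ?_ ?_ ?_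
  · intro m hm
    rw [Finset.Nat.mem_antidiagonalTuple] at hm
    refine Finset.mem_sigma.2 ⟨?_, ?_⟩
    · rw [Finset.HasAntidiagonal.mem_antidiagonal]
      rw [← hm, Fin.sum_univ_succ]; rfl
    · exact Finset.Nat.mem_antidiagonalTuple.2 rfl
  · intro q hq
    rw [Finset.mem_sigma, Finset.HasAntidiagonal.mem_antidiagonal, Finset.Nat.mem_antidiagonalTuple] at hq
    rw [Finset.Nat.mem_antidiagonalTuple, Fin.sum_cons, hq.2, hq.1]
  · intro m _
    exact Fin.cons_self_tail m
  · intro q hq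
    rw [Finset.mem_sigma, Finset.Nat.mem_antidiagonalTuple] at hq
    refine Sigma.ext ?_ (by simp [Fin.tail_cons])
    simp [Fin.tail_cons, hq.2]
  · intro m _
    rw [Fin.cons_self_tail m]

theorem richmond_shallit_recursion (d n : ℕ) (hd : 2 ≤ d) :
    f d n = ∑ k ∈ Finset.range (n + 1), (n.choose k) ^ 2 * f (d - 1) k := by
  obtain ⟨e, rfl⟩ : ∃ e, d = e + 1 := ⟨d - 1, (Nat.succ_pred_eq_of_pos (by omega)).symm⟩
  simp only [Nat.add_sub_cancel]
  rw [f, sum_antidiagonalTuple_succ]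
  have h1 : ∀ p ∈ Finset.HasAntidiagonal.antidiagonal n,
      (∑ x ∈ Finset.Nat.antidiagonalTuple e p.2,
        (Nat.multinomial Finset.univ (Fin.cons p.1 x : Fin (e + 1) → ℕ)) ^ 2)
        = (n.choose p.2) ^ 2 * f e p.2 := by
    intro p hp
    rw [Finset.HasAntidiagonal.mem_antidiagonal] at hp
    rw [f, Finset.mul_sum]
    refine Finset.sum_congr rfl fun x hx => ?_
    rw [Finset.Nat.mem_antidiagonalTuple] at hx
    rw [multinomial_univ_cons, hx, Nat.choose_symm_add, hp, mul_pow]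
  rw [Finset.sum_congr rfl h1]
  refine Finset.sum_nbij' (fun p => p.2) (fun k => (n - k, k)) ?_ ?_ ?_ ?_ ?_
  · rintro ⟨a, b⟩ hp
    rw [Finset.HasAntidiagonal.mem_antidiagonal] at hp
    rw [Finset.mem_range]
    simp only at hp ⊢
    omega
  · intro k hk
    rw [Finset.mem_range] at hk
    rw [Finset.HasAntidiagonal.mem_antidiagonal]
    simp only
    omega
  · rintro ⟨a, b⟩ hp
    rw [Finset.HasAntidiagonal.mem_antidiagonal] at hp
    simp only at hp ⊢
    have : n - b = a := by omega
    rw [this]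
  · intro k _; rfl
  · intro p _; rfl
end

section
/- The number of abelian squares (x,y) of length n+n over an alphabet A of size d such that x begins with a fixed letter a ∈ A equals Σ_{k=0}^{n-1} C(n-1,k) · C(n,k) · f_{d-1}(k), where f_{d-1}(k) counts abelian squares of length k+k over A \ {a}. -/
open Finset



lemma exists_perm_comp {n : ℕ} {ι : Type*} [Fintype ι] [DecidableEq ι] (x y : Fin n → ι)
    (h : ∀ b, Fintype.card {i // x i = b} = Fintype.card {i // y i = b}) :
    ∃ g : Equiv.Perm (Fin n), ∀ i, x (g i) = y i := by
  have e : ∀ b, {i // y i = b} ≃ {i // x i = b} := fun b => Fintype.equivOfCardEq (h b).symm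
  refine ⟨((Equiv.sigmaFiberEquiv y).symm.trans (Equiv.sigmaCongrRight e)).trans
    (Equiv.sigmaFiberEquiv x), fun i => ?_⟩
  simp only [Equiv.trans_apply, Equiv.sigmaFiberEquiv, Equiv.coe_fn_symm_mk,
    Equiv.sigmaCongrRight_apply, Equiv.coe_fn_mk]
  exact (e (y i) ⟨i, rfl⟩).2


lemma card_fiber_comp {n : ℕ} {ι : Type*} [Fintype ι] [DecidableEq ι]
    (x : Fin n → ι) (g : Equiv.Perm (Fin n)) (b : ι) :
    Fintype.card {i // x (g i) = b} = Fintype.card {i // x i = b} :=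
  Fintype.card_congr (g.subtypeEquiv (fun i => Iff.rfl))

lemma card_parikh {n d : ℕ} (m : Fin d → ℕ) (hm : ∑ b, m b = n) :
    Fintype.card {x : Fin n → Fin d // ∀ b, Fintype.card {i // x i = b} = m b}
      = Nat.multinomial Finset.univ m := by
  classical
  obtain ⟨e⟩ : Nonempty ((Σ b : Fin d, Fin (m b)) ≃ Fin n) :=
    ⟨Fintype.equivFinOfCardEq (by simp [hm])⟩
  set x₀ : Fin n → Fin d := fun i => (e.symm i).1 with hx₀def
  have hx₀ : ∀ b, Fintype.card {i // x₀ i = b} = m b := by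
    intro b
    have e1 : {i // x₀ i = b} ≃ {p : Σ c : Fin d, Fin (m c) // p.1 = b} :=
      e.symm.subtypeEquiv (q := fun p => p.1 = b) (fun i => Iff.rfl)
    rw [Fintype.card_congr e1,
      Fintype.card_congr (Equiv.subtypeSigmaEquiv (fun c => Fin (m c)) (fun c => c = b)),
      Fintype.card_sigma]
    haveI : Unique {c : Fin d // c = b} := ⟨⟨⟨b, rfl⟩⟩, fun c => Subtype.ext c.2⟩
    simp
    exact congrArg m (default : {c : Fin d // c = b}).2
  -- main part
  set T := {x : Fin n → Fin d // ∀ b, Fintype.card {i // x i = b} = m b} with hT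
  set Φ : Equiv.Perm (Fin n) → T := fun g =>
    ⟨x₀ ∘ g, fun b => (card_fiber_comp x₀ g b).trans (hx₀ b)⟩ with hΦ
  have key : Fintype.card (Equiv.Perm (Fin n)) = Fintype.card T * ∏ b, (m b).factorial := by
    have main : ∀ t : T, #(filter (fun g => Φ g = t) univ) = ∏ b, (m b).factorial := by
      intro t
      obtain ⟨g₀, hg₀⟩ := exists_perm_comp x₀ t.1 (fun b => (hx₀ b).trans (t.2 b).symm)
      have e2 : {g : Equiv.Perm (Fin n) // Φ g = t} ≃
          {g : Equiv.Perm (Fin n) // x₀ ∘ g = x₀} := by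
        refine Equiv.subtypeEquiv (Equiv.mulRight g₀⁻¹) (fun g => ?_)
        constructor
        · intro h
          funext i
          have : x₀ (g i) = t.1 i := congrFun (congrArg Subtype.val h) i
          show x₀ (g (g₀⁻¹ i)) = x₀ i
          have h2 : x₀ (g (g₀⁻¹ i)) = t.1 (g₀⁻¹ i) := congrFun (congrArg Subtype.val h) _
          rw [h2, ← hg₀ (g₀⁻¹ i), Equiv.Perm.inv_def, Equiv.apply_symm_apply]
        · intro h
          have h' : ∀ i, x₀ (g (g₀⁻¹ i)) = x₀ i := fun i => congrFun h i
          refine Subtype.ext (funext fun i => ?_)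
          show x₀ (g i) = t.1 i
          rw [← hg₀ i, ← h' (g₀ i), Equiv.Perm.inv_def, Equiv.symm_apply_apply]
      rw [← Fintype.card_subtype, Fintype.card_congr e2, DomMulAct.stabilizer_card]
      exact Finset.prod_congr rfl fun b _ => by rw [hx₀ b]
    rw [Fintype.card, Finset.card_eq_sum_card_fiberwise
      (f := Φ) (t := univ) (fun _ _ => mem_univ _)]
    rw [Finset.sum_congr rfl fun t _ => main t, Finset.sum_const, smul_eq_mul, Fintype.card]
  have hfac : Fintype.card (Equiv.Perm (Fin n)) = n.factorial := by
    rw [Fintype.card_perm, Fintype.card_fin]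
  have spec := Nat.multinomial_spec (univ : Finset (Fin d)) m
  rw [hm] at spec
  have hpos : 0 < ∏ b, (m b).factorial := Finset.prod_pos fun b _ => (m b).factorial_pos
  apply Nat.eq_of_mul_eq_mul_right hpos
  rw [← key, hfac, ← spec, mul_comm]


lemma multinomial_transport {α β : Type*} [DecidableEq α] [Fintype β] (s : Finset α)
    (e : β ≃ s) (g : α → ℕ) :
    Nat.multinomial s g = Nat.multinomial univ (fun j => g (e j)) := by
  have hp : ∏ j : β, (g (e j)).factorial = ∏ i ∈ s, (g i).factorial := by
    rw [← Finset.prod_coe_sort s (fun i => (g i).factorial)]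
    exact Equiv.prod_comp e (fun i : s => (g i).factorial)
  have hs : ∑ j : β, g (e j) = ∑ i ∈ s, g i := by
    rw [← Finset.sum_coe_sort s g]
    exact Equiv.sum_comp e (fun i : s => g i)
  have h1 := Nat.multinomial_spec s g
  have h2 := Nat.multinomial_spec (univ : Finset β) (fun j => g (e j))
  simp only [hp, hs] at h2
  have hpos : 0 < ∏ i ∈ s, (g i).factorial := Finset.prod_pos fun i _ => (g i).factorial_pos
  exact Nat.eq_of_mul_eq_mul_left hpos (h1.trans h2.symm)

lemma card_head_zero {n d : ℕ} (a : Fin d) (m : Fin d → ℕ) (hma : m a = 0) :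
    Fintype.card {x : Fin (n+1) → Fin d //
      (∀ b, Fintype.card {i // x i = b} = m b) ∧ x 0 = a} = 0 := by
  rw [Fintype.card_eq_zero_iff]
  refine ⟨fun ⟨x, hx, hxa⟩ => ?_⟩
  exact (Fintype.card_eq_zero_iff.mp ((hx a).trans hma)).false ⟨0, hxa⟩

lemma fiber_cons {n d : ℕ} (a : Fin d) (x' : Fin n → Fin d) (b : Fin d) :
    Fintype.card {i : Fin (n+1) // (Fin.cons a x' : Fin (n+1) → Fin d) i = b}
      = (if a = b then 1 else 0) + Fintype.card {i // x' i = b} := by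
  classical
  simp only [Fintype.card_subtype]
  rw [Finset.card_filter, Finset.card_filter, Fin.sum_univ_succ]
  simp [Fin.cons_succ]

lemma card_head {n d : ℕ} (a : Fin d) (m : Fin d → ℕ) (hma : m a ≠ 0) :
    Fintype.card {x : Fin (n+1) → Fin d //
      (∀ b, Fintype.card {i // x i = b} = m b) ∧ x 0 = a}
    = Fintype.card {x' : Fin n → Fin d //
      ∀ b, Fintype.card {i // x' i = b} = Function.update m a (m a - 1) b} := by
  classical
  refine (Fintype.card_congr (Equiv.symm ⟨fun x' => ⟨Fin.cons a x'.1, ?_, by simp⟩,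
    fun x => ⟨fun i => x.1 i.succ, ?_⟩, ?_, ?_⟩))
  · intro b
    rw [fiber_cons, x'.2 b]
    by_cases hb : b = a
    · subst hb
      rw [Function.update_self, if_pos rfl]
      omega
    · rw [Function.update_of_ne hb, if_neg (fun h => hb h.symm), Nat.zero_add]
  · intro b
    have hx : x.1 = Fin.cons a (fun i => x.1 i.succ) := by
      funext i
      refine Fin.cases ?_ ?_ i
      · simp [x.2.2]
      · intro j; simp [Fin.cons_succ]
    have := x.2.1 b
    rw [hx, fiber_cons] at this
    simp only [Fintype.card_subtype] at this ⊢
    by_cases hb : b = a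
    · subst hb
      rw [Function.update_self]
      rw [if_pos rfl] at this
      omega
    · rw [Function.update_of_ne hb]
      rw [if_neg (fun h => hb h.symm)] at this
      omega
  · intro x'
    refine Subtype.ext (funext fun i => ?_)
    simp [Fin.cons_succ]
  · intro x
    refine Subtype.ext (funext fun i => ?_)
    refine Fin.cases ?_ ?_ i
    · simp [x.2.2]
    · intro j; simp [Fin.cons_succ]

theorem abelianSquares_first_letter_fixed (d n : ℕ) (hn : 0 < n) (a : Fin d) :
    Fintype.card {p : (Fin n → Fin d) × (Fin n → Fin d) //
        (∀ b : Fin d, (Finset.univ.filter (fun i => p.1 i = b)).card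
                    = (Finset.univ.filter (fun i => p.2 i = b)).card) ∧
        p.1 ⟨0, hn⟩ = a}
      = ∑ k ∈ Finset.range n, (n - 1).choose k * n.choose k * f (d - 1) k := by
  classical
  obtain ⟨n', rfl⟩ : ∃ n', n = n' + 1 := ⟨n - 1, (Nat.succ_pred_eq_of_pos hn).symm⟩
  -- clean up the statement
  have hconv : Fintype.card {p : (Fin (n'+1) → Fin d) × (Fin (n'+1) → Fin d) //
        (∀ b : Fin d, (Finset.univ.filter (fun i => p.1 i = b)).card
                    = (Finset.univ.filter (fun i => p.2 i = b)).card) ∧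
        p.1 ⟨0, hn⟩ = a}
      = Fintype.card {p : (Fin (n'+1) → Fin d) × (Fin (n'+1) → Fin d) //
        (∀ b : Fin d, Fintype.card {i // p.1 i = b} = Fintype.card {i // p.2 i = b}) ∧
        p.1 0 = a} := by
    refine Fintype.card_congr (Equiv.subtypeEquivRight (fun p => ?_))
    simp only [Fintype.card_subtype]
    rfl
  rw [hconv]
  set A := Finset.Nat.antidiagonalTuple d (n'+1) with hA
  have hfibmem : ∀ y : Fin (n'+1) → Fin d,
      (fun b => Fintype.card {i // y i = b}) ∈ A := by
    intro y
    rw [hA, Finset.Nat.mem_antidiagonalTuple]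
    simp only [Fintype.card_subtype]
    rw [← Finset.card_eq_sum_card_fiberwise (f := y) (fun i _ => mem_univ (y i))]
    simp
  have step1 : Fintype.card {p : (Fin (n'+1) → Fin d) × (Fin (n'+1) → Fin d) //
        (∀ b : Fin d, Fintype.card {i // p.1 i = b} = Fintype.card {i // p.2 i = b}) ∧
        p.1 0 = a}
      = ∑ m ∈ A,
          Fintype.card {x : Fin (n'+1) → Fin d //
            (∀ b, Fintype.card {i // x i = b} = m b) ∧ x 0 = a}
        * Fintype.card {y : Fin (n'+1) → Fin d //
            ∀ b, Fintype.card {i // y i = b} = m b} := by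
    rw [Fintype.card_subtype]
    rw [Finset.card_eq_sum_card_fiberwise
      (f := fun p : (Fin (n'+1) → Fin d) × (Fin (n'+1) → Fin d) =>
        (fun b => Fintype.card {i // p.2 i = b}))
      (t := A) (fun p _ => hfibmem p.2)]
    refine Finset.sum_congr rfl fun m _ => ?_
    rw [Finset.filter_filter]
    have heq : Finset.univ.filter (fun p : (Fin (n'+1) → Fin d) × (Fin (n'+1) → Fin d) =>
        ((∀ b, Fintype.card {i // p.1 i = b} = Fintype.card {i // p.2 i = b}) ∧ p.1 0 = a) ∧
          (fun b => Fintype.card {i // p.2 i = b}) = m)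
        = Finset.univ.filter (fun p : (Fin (n'+1) → Fin d) × (Fin (n'+1) → Fin d) =>
          ((∀ b, Fintype.card {i // p.1 i = b} = m b) ∧ p.1 0 = a) ∧
          (∀ b, Fintype.card {i // p.2 i = b} = m b)) := by
      refine Finset.filter_congr (fun p _ => ?_)
      constructor
      · rintro ⟨⟨h1, h2⟩, h3⟩
        exact ⟨⟨fun b => (h1 b).trans (congrFun h3 b), h2⟩, fun b => congrFun h3 b⟩
      · rintro ⟨⟨h1, h2⟩, h3⟩
        exact ⟨⟨fun b => (h1 b).trans (h3 b).symm, h2⟩, funext h3⟩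
    rw [heq, ← Finset.univ_product_univ,
      Finset.filter_product (fun x : Fin (n'+1) → Fin d =>
          (∀ b, Fintype.card {i // x i = b} = m b) ∧ x 0 = a)
        (fun y : Fin (n'+1) → Fin d => ∀ b, Fintype.card {i // y i = b} = m b),
      Finset.card_product, ← Fintype.card_subtype, ← Fintype.card_subtype]
  rw [step1]
  -- notation
  have hcard : Fintype.card ((univ.erase a : Finset (Fin d)) : Type) = d - 1 := by
    rw [Fintype.card_coe, card_erase_of_mem (mem_univ a), card_univ, Fintype.card_fin]
  obtain ⟨ee⟩ : Nonempty (Fin (d-1) ≃ (univ.erase a : Finset (Fin d))) :=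
    ⟨(Fintype.equivFinOfCardEq hcard).symm⟩
  set F : (Fin d → ℕ) → ℕ := fun m =>
      Fintype.card {x : Fin (n'+1) → Fin d //
        (∀ b, Fintype.card {i // x i = b} = m b) ∧ x 0 = a}
    * Fintype.card {y : Fin (n'+1) → Fin d //
        ∀ b, Fintype.card {i // y i = b} = m b} with hF
  have hmemA : ∀ m : Fin d → ℕ, m ∈ A ↔ ∑ b, m b = n' + 1 := fun m =>
    Finset.Nat.mem_antidiagonalTuple
  -- step 2 : restrict to m with m a ≠ 0
  have step2 : ∑ m ∈ A, F m = ∑ m ∈ A.filter (fun m => m a ≠ 0), F m := by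
    refine (Finset.sum_filter_of_ne fun m _ hne => ?_).symm
    intro hma0
    apply hne
    simp only [hF]
    rw [card_head_zero a m hma0, Nat.zero_mul]
  -- step 3 : fiberwise over k
  have hmap : ∀ m ∈ A.filter (fun m => m a ≠ 0),
      (∑ b ∈ univ.erase a, m b) ∈ Finset.range (n'+1) := by
    intro m hm
    rw [Finset.mem_filter, hmemA] at hm
    have h2 := Finset.add_sum_erase univ m (mem_univ a)
    rw [Finset.mem_range]
    clear step1 step2
    omega
  have step3 : ∑ m ∈ A.filter (fun m => m a ≠ 0), F m
      = ∑ k ∈ Finset.range (n'+1), ∑ m ∈ (A.filter (fun m => m a ≠ 0)).filter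
          (fun m => ∑ b ∈ univ.erase a, m b = k), F m :=
    (Finset.sum_fiberwise_of_maps_to hmap F).symm
  rw [step2, step3]
  clear hconv step1 step2 step3
  refine Finset.sum_congr rfl fun k hk => ?_
  rw [Finset.mem_range] at hk
  -- value of F on the inner fiber
  have hval : ∀ m : Fin d → ℕ, (∑ b, m b = n'+1) → m a ≠ 0 → (∑ b ∈ univ.erase a, m b = k) →
      F m = n'.choose k * ((n'+1).choose k *
        (Nat.multinomial univ (fun j => m ((ee j : (univ.erase a : Finset (Fin d)))))) ^ 2) := by
    intro m hsum hma hkm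
    have hka : m a + k = n' + 1 := by
      have h2 := Finset.add_sum_erase univ m (mem_univ a)
      omega
    have hsplit : Nat.multinomial univ m
        = (m a + ∑ b ∈ univ.erase a, m b).choose (m a) * Nat.multinomial (univ.erase a) m := by
      conv_lhs => rw [← Finset.insert_erase (mem_univ a)]
      exact Nat.multinomial_insert (Finset.notMem_erase a univ) m
    set M := Nat.multinomial (univ.erase a) m with hM
    have hy : Fintype.card {y : Fin (n'+1) → Fin d //
        ∀ b, Fintype.card {i // y i = b} = m b} = (n'+1).choose k * M := by
      have hch : (n' + 1).choose (m a) = (n' + 1).choose k := by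
        rw [← Nat.choose_symm (by omega : m a ≤ n' + 1)]
        congr 1
        omega
      rw [card_parikh m hsum, hsplit, hkm, hka, hch]
    have hupd : ∑ b, Function.update m a (m a - 1) b = n' := by
      rw [Finset.sum_update_of_mem (mem_univ a), Finset.sdiff_singleton_eq_erase, hkm]
      clear hy
      omega
    have hsplit' : Nat.multinomial univ (Function.update m a (m a - 1))
        = (Function.update m a (m a - 1) a + ∑ b ∈ univ.erase a, Function.update m a (m a - 1) b).choose
            (Function.update m a (m a - 1) a)
          * Nat.multinomial (univ.erase a) (Function.update m a (m a - 1)) := by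
      conv_lhs => rw [← Finset.insert_erase (mem_univ a)]
      exact Nat.multinomial_insert (Finset.notMem_erase a univ) _
    have hMeq : Nat.multinomial (univ.erase a) (Function.update m a (m a - 1)) = M :=
      Nat.multinomial_congr fun b hb =>
        Function.update_of_ne (Finset.ne_of_mem_erase hb) _ m
    have hsum' : ∑ b ∈ univ.erase a, Function.update m a (m a - 1) b = k := by
      rw [← hkm]
      exact Finset.sum_congr rfl fun b hb =>
        Function.update_of_ne (Finset.ne_of_mem_erase hb) _ m
    have hx : Fintype.card {x : Fin (n'+1) → Fin d //
        (∀ b, Fintype.card {i // x i = b} = m b) ∧ x 0 = a} = n'.choose k * M := by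
      clear hy
      have h5 : m a - 1 + k = n' := by omega
      have hch' : n'.choose (m a - 1) = n'.choose k := by
        rw [← Nat.choose_symm (by clear hupd hsplit' hMeq hsum'; omega : m a - 1 ≤ n')]
        congr 1
        omega
      rw [card_head a m hma, card_parikh _ hupd, hsplit', hMeq, hsum', Function.update_self,
        h5, hch']
    have hMM : M = Nat.multinomial univ
        (fun j => m ((ee j : (univ.erase a : Finset (Fin d))))) :=
      multinomial_transport (univ.erase a) ee m
    simp only [hF]
    rw [hx, hy, hMM]
    ring
  -- reindex the inner sum
  have hmem' : ∀ m : Fin d → ℕ,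
      m ∈ (A.filter (fun m => m a ≠ 0)).filter (fun m => ∑ b ∈ univ.erase a, m b = k)
      ↔ (∑ b, m b = n' + 1) ∧ m a ≠ 0 ∧ ∑ b ∈ univ.erase a, m b = k := by
    intro m
    rw [Finset.mem_filter, Finset.mem_filter, hmemA]
    tauto
  have hbij : ∑ m ∈ (A.filter (fun m => m a ≠ 0)).filter
        (fun m => ∑ b ∈ univ.erase a, m b = k), F m
      = ∑ m' ∈ Finset.Nat.antidiagonalTuple (d-1) k,
          n'.choose k * ((n'+1).choose k * (Nat.multinomial univ m') ^ 2) := by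
    refine Finset.sum_nbij'
      (fun m => fun j : Fin (d-1) => m ((ee j : (univ.erase a : Finset (Fin d)))))
      (fun m' => fun b : Fin d =>
        if h : b ∈ univ.erase a then m' (ee.symm ⟨b, h⟩) else n' + 1 - k)
      ?_ ?_ ?_ ?_ ?_
    · intro m hm
      rw [hmem'] at hm
      rw [Finset.Nat.mem_antidiagonalTuple]
      rw [Equiv.sum_comp ee (fun x : (univ.erase a : Finset (Fin d)) => m x),
        Finset.sum_coe_sort (univ.erase a) m]
      exact hm.2.2
    · intro m' hm'
      rw [Finset.Nat.mem_antidiagonalTuple] at hm'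
      have hsume : ∑ b ∈ univ.erase a,
          (if h : b ∈ univ.erase a then m' (ee.symm ⟨b, h⟩) else n' + 1 - k) = k := by
        rw [← Finset.sum_coe_sort (univ.erase a)]
        have : ∀ x : (univ.erase a : Finset (Fin d)),
            (if h : (x : Fin d) ∈ univ.erase a then m' (ee.symm ⟨x, h⟩) else n' + 1 - k)
            = m' (ee.symm x) := by
          intro x
          rw [dif_pos x.2]
        rw [Finset.sum_congr rfl fun x _ => this x]
        rw [Equiv.sum_comp ee.symm m', hm']
      rw [hmem']
      beta_reduce
      refine ⟨?_, ?_, hsume⟩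
      · rw [← Finset.add_sum_erase univ _ (mem_univ a), hsume]
        rw [dif_neg (Finset.notMem_erase a univ)]
        omega
      · rw [dif_neg (Finset.notMem_erase a univ)]
        omega
    · intro m hm
      rw [hmem'] at hm
      funext b
      beta_reduce
      by_cases hb : b ∈ univ.erase a
      · rw [dif_pos hb]
        congr 1
        exact congrArg _ (Equiv.apply_symm_apply ee ⟨b, hb⟩)
      · have hba : b = a := by
          by_contra hne
          exact hb (Finset.mem_erase.mpr ⟨hne, mem_univ b⟩)
        subst hba
        rw [dif_neg hb]
        have h2 := Finset.add_sum_erase univ m (mem_univ b)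
        have h3 := hm.1
        have h4 := hm.2.2
        omega
    · intro m' hm'
      funext j
      beta_reduce
      rw [dif_pos (ee j).2]
      congr 1
      rw [Subtype.coe_eta, Equiv.symm_apply_apply]
    · intro m hm
      rw [hmem'] at hm
      exact hval m hm.1 hm.2.1 hm.2.2
  rw [hbij, ← Finset.mul_sum, ← Finset.mul_sum]
  simp only [f, Nat.add_sub_cancel]
  ring
end
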